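/- Let A be an algebraic curvature tensor on a nondegenerate inner product space V of finite dimension, with Ricci operator rho (the self-adjoint operator characterized by <rho x, y> = trace of z -> R(z,x)y). Then rho commutes with every Jacobi operator J(x) for all x in V if and only if rho commutes with every curvature operator R(x,y) for all x,y in V. -/

import Mathlib

set_option maxHeartbeats 2000000 in
/-- For an algebraic curvature tensor with Ricci operator `rho`,
`rho` commutes with every Jacobi operator `J(x)` iff `rho` commutes with every
curvature operator `R(x,y)` (Jacobi--Videv iff skew--Videv). -/
theorem stmt_3 {V : Type*} [AddCommGroup V] [Module ℝ V] [FiniteDimensional ℝ V]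
    (B : LinearMap.BilinForm ℝ V) (hBsymm : ∀ x y, B x y = B y x)
    (hBnd : B.Nondegenerate)
    (A : V →ₗ[ℝ] V →ₗ[ℝ] V →ₗ[ℝ] V →ₗ[ℝ] ℝ)
    (hpair : ∀ x y z w, A x y z w = A z w x y)
    (hanti : ∀ x y z w, A x y z w = -A y x z w)
    (hbianchi : ∀ x y z w, A x y z w + A y z x w + A z x y w = 0)
    (Rop : V →ₗ[ℝ] V →ₗ[ℝ] V →ₗ[ℝ] V)
    (hRop : ∀ x y z w, B (Rop x y z) w = A x y z w)
    (Jop : V → V →ₗ[ℝ] V)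
    (hJop : ∀ x y, Jop x y = Rop y x x)
    (rho : V →ₗ[ℝ] V) (hrho_sa : ∀ x y, B (rho x) y = B x (rho y))
    (hrho : ∀ x y, B (rho x) y = LinearMap.trace ℝ V ((Rop.flip x).flip y)) :
    (∀ x, rho ∘ₗ Jop x = Jop x ∘ₗ rho) ↔
      (∀ x y, rho ∘ₗ Rop x y = Rop x y ∘ₗ rho) := by
  have key : ∀ u v : V, (∀ n, B u n = B v n) → u = v := by
    intro u v h
    have h0 : ∀ n, B (u - v) n = 0 := by
      intro n
      simp [map_sub, LinearMap.sub_apply, h n]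
    exact sub_eq_zero.mp (hBnd.1 _ h0)
  constructor
  · intro hJ x y
    have hJVs : ∀ p a w, A (rho a) p p w = A a p p (rho w) := by
      intro p a w
      have h1 : rho (Rop a p p) = Rop (rho a) p p := by
        have := congrArg (fun f => f a) (hJ p)
        simpa [LinearMap.comp_apply, hJop] using this
      calc A (rho a) p p w = B (Rop (rho a) p p) w := (hRop _ _ _ _).symm
        _ = B (rho (Rop a p p)) w := by rw [h1]
        _ = B (Rop a p p) (rho w) := hrho_sa _ _
        _ = A a p p (rho w) := hRop _ _ _ _
    have hPJV : ∀ a b c d, A (rho a) b c d + A (rho a) c b d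
        - A a b c (rho d) - A a c b (rho d) = 0 := by
      intro a b c d
      have h1 := hJVs (b + c) a d
      have h2 := hJVs b a d
      have h3 := hJVs c a d
      simp only [map_add, LinearMap.add_apply] at h1
      linarith
    apply LinearMap.ext
    intro z
    simp only [LinearMap.comp_apply]
    apply key
    intro w
    have lhs : B (rho (Rop x y z)) w = A x y z (rho w) := by
      rw [hrho_sa, hRop]
    have rhs : B (Rop x y (rho z)) w = A x y (rho z) w := hRop _ _ _ _
    have goal' : A x y (rho z) w = A x y z (rho w) := by
      linear_combination (-1/3) * (hpair (rho x) y z w) + (2/3) * (hanti (rho x) y w z) - (2/3) * (hpair (rho x) y w z) - (1/3) * (hbianchi (rho x) y w z) - (1/3) * (hpair (rho x) z y w) + (2/3) * (hanti (rho x) z w y) - (2/3) * (hpair (rho x) z w y) - (1/3) * (hbianchi (rho x) z w y) + (1/3) * (hanti (rho x) w y z) - (2/3) * (hbianchi (rho x) w y z) + (1/3) * (hanti (rho x) w z y) - (2/3) * (hbianchi (rho x) w z y) - (1/3) * (hanti (rho y) x z w) + (1/3) * (hpair (rho y) x z w) + (1/3) * (hbianchi (rho y) x z w) + (1/3) * (hanti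 (rho y) x w z) + (1/3) * (hbianchi (rho y) z x w) - (1/3) * (hpair (rho y) z w x) + (1/3) * (hbianchi (rho y) z w x) + (1/3) * (hanti (rho y) w x z) + (1/3) * (hpair (rho y) w x z) - (1/3) * (hbianchi (rho y) w x z) - (1/3) * (hanti (rho y) w z x) + (1/3) * (hpair (rho y) w z x) - (2/3) * (hanti (rho z) x y w) + (2/3) * (hbianchi (rho z) x y w) - (1/3) * (hanti (rho z) y x w) + (1/3) * (hbianchi (rho z) y x w) + (1/3) * (hanti (rho z) w x y) - (1/3) * (hpair (rho z) w x y) - (1/3) * (hanti (rho z) w y x) + (1/3) * (hpair (rho z) w y x) - (1/3) * (hanti (rho w) x y z) - (1/3) * (hpair (rho w) x y z) + (2/3) * (hbianchi (rho w) x y z) - (1/3) * (hanti (rho w) x z y) + (1/3) * (hbianchi (rho w) x z y) - (1/3) * (hanti (rho w) y x z) + (1/3) * (hpair (rho w) y x z) + (1/3) * (hpair (rho w) y z x) - (1/3) * (hbianchi (rho w) y z x) - (1) * (hanti (rho w) z x y) + (2/3) * (hpair (rho w) z x y) + (1/3) * (hbianchi (rho w) z x y) + (1/3) * (hpair x (rho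 z) y w) + (1/3) * (hpair x (rho w) y z) - (1/3) * (hpair y (rho z) x w) - (1/3) * (hpair y (rho w) x z) - (1/3) * (hpair z (rho y) x w) + (2/3) * (hpair z (rho w) x y) + (1/3) * (hpair z (rho w) y x) - (1/3) * (hpair w (rho y) x z) - (1/3) * (hpair w (rho z) x y) + (1/3) * (hpair w (rho z) y x) + (1/3) * (hPJV x y z w) + (1/3) * (hPJV x y w z) + (1/3) * (hPJV x z w y) - (1/3) * (hPJV y x z w) - (1/3) * (hPJV y x w z)
    rw [lhs, rhs]
    exact goal'.symm
  · intro hSV x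
    have hSVs : ∀ a b c d, A a b (rho c) d = A a b c (rho d) := by
      intro a b c d
      have h1 : rho (Rop a b c) = Rop a b (rho c) := by
        have := congrArg (fun f => f c) (hSV a b)
        simpa [LinearMap.comp_apply] using this
      calc A a b (rho c) d = B (Rop a b (rho c)) d := (hRop _ _ _ _).symm
        _ = B (rho (Rop a b c)) d := by rw [h1]
        _ = B (Rop a b c) (rho d) := hrho_sa _ _
        _ = A a b c (rho d) := hRop _ _ _ _
    have hgen : ∀ x y z w, A (rho x) y z w = A x y z (rho w) := by
      intro x y z w
      linear_combination (1/2) * (hpair (rho x) y z w) + (1/2) * (hbianchi (rho x) y z w) - (1/2) * (hanti (rho x) z y w) + (1/2) * (hpair (rho x) z y w) + (1/2) * (hanti (rho y) x z w) - (1/2) * (hbianchi (rho y) x z w) + (1/2) * (hanti (rho y) z x w) - (1/2) * (hpair (rho y) z x w) + (1/2) * (hanti (rho z) x y w) - (1/2) * (hbianchi (rho z) x y w) - (1/2) * (hanti (rho w) x y z) + (1/2) * (hbianchi (rho w) x y z) - (1/2) * (hanti (rho w) z x y) + (1/2) * (hpair (rho w) z x y) - (1/2) * (hpair x (rho y) z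 w) - (1/2) * (hpair x (rho z) y w) + (1/2) * (hpair x (rho w) y z) + (1/2) * (hpair y (rho z) x w) - (1/2) * (hpair y (rho w) x z) + (1/2) * (hpair z (rho w) x y) + (1/2) * (hSVs x y z w) + (1/2) * (hSVs x z y w) - (1/2) * (hSVs x w y z) - (1/2) * (hSVs y z x w) + (1/2) * (hSVs y w x z) + (1/2) * (hSVs z w x y)
    apply LinearMap.ext
    intro y
    simp only [LinearMap.comp_apply, hJop]
    apply key
    intro w
    rw [hrho_sa, hRop, hRop]
    exact (hgen y x x w).symm
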